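/- Let f and g be finite mixtures of generalized normal densities with all weights, scales, and shapes strictly positive. Let β_f = min component shape of f and α_f = max of the scales of components of f whose shape equals β_f; define β_g and α_g analogously for g. If β_f ≠ β_g, or if β_f = β_g and α_f ≠ α_g, then the ratio r(x) = f(x)/g(x) is non-monotonic: there exist points x₀ < x₁ < x₂ such that (r(x₀) − r(x₁)) · (r(x₁) − r(x₂)) < 0. -/

import Mathlib

/-- The generalized normal density with location `μ`, scale `α`, and shape `β`. -/
noncomputable def gnpdf (μ α β x : ℝ) : ℝ :=
  β / (2 * α * Real.Gamma (1 / β)) * Real.exp (-((|x - μ| / α) ^ β))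

open Filter Real Topology

lemma key_tendsto (μ μ' α α' β β' : ℝ) (hα : 0 < α) (hα' : 0 < α') (hβ : 0 < β) (hβ' : 0 < β')
    (hlt : β < β' ∨ (β = β' ∧ α' < α)) :
    Tendsto (fun x => (|x - μ'| / α') ^ β' - (|x - μ| / α) ^ β) atTop atTop := by
  rcases hlt with h | ⟨hbe, hal⟩
  · have c1 : (0:ℝ) < (2*α')^β' := Real.rpow_pos_of_pos (by positivity) _
    have hH : Tendsto (fun x : ℝ => x ^ β * (x ^ (β' - β) / (2*α')^β' - 2^β/α^β)) atTop atTop := by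
      refine (tendsto_rpow_atTop hβ).atTop_mul_atTop₀ ?_
      have := ((tendsto_rpow_atTop (y := β' - β) (by linarith)).atTop_div_const c1)
      simpa [sub_eq_add_neg] using tendsto_atTop_add_const_right atTop (-(2^β/α^β)) this
    have hG : Tendsto (fun x : ℝ => (x/(2*α'))^β' - (2*x/α)^β) atTop atTop := by
      refine hH.congr' ?_
      filter_upwards [eventually_gt_atTop 0] with x hx
      rw [Real.div_rpow hx.le (by positivity), Real.div_rpow (by positivity) hα.le,
        Real.mul_rpow (by norm_num) hx.le,
        show x ^ β' = x ^ β * x ^ (β' - β) by rw [← Real.rpow_add hx]; ring_nf]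
      ring
    refine tendsto_atTop_mono' atTop ?_ hG
    filter_upwards [eventually_ge_atTop (2*|μ'|), eventually_ge_atTop (|μ|),
      eventually_gt_atTop 0] with x h1 h2 hx
    have e1 : (x/(2*α'))^β' ≤ (|x - μ'| / α') ^ β' := by
      apply Real.rpow_le_rpow (by positivity) _ hβ'.le
      rw [div_le_div_iff₀ (by positivity) hα']
      have : x/2 ≤ |x - μ'| := by
        have := abs_sub_abs_le_abs_sub x μ'
        have hax : |x| = x := abs_of_pos hx
        linarith [this, abs_nonneg (x - μ')]
      nlinarith
    have e2 : (|x - μ| / α) ^ β ≤ (2*x/α)^β := by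
      apply Real.rpow_le_rpow (by positivity) _ hβ.le
      have : |x - μ| ≤ 2*x := (abs_sub x μ).trans (by rw [abs_of_pos hx]; linarith [le_abs_self μ])
      exact div_le_div_of_nonneg_right this hα.le
    linarith
  · subst hbe
    set l := (α + α')/2 with hl
    have hl1 : α' < l := by simp only [hl]; linarith
    have hl2 : l < α := by simp only [hl]; linarith
    have hlpos : 0 < l := by linarith
    have hc : (0:ℝ) < (l^β)⁻¹ - (α^β)⁻¹ := by
      have : l^β < α^β := Real.rpow_lt_rpow hlpos.le hl2 hβ
      have h1 : (0:ℝ) < l^β := Real.rpow_pos_of_pos hlpos _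
      have h2 : (0:ℝ) < α^β := Real.rpow_pos_of_pos hα _
      have := one_div_lt_one_div_of_lt h1 this
      simpa [one_div, sub_pos] using this
    have hG : Tendsto (fun x : ℝ => (x - μ)^β * ((l^β)⁻¹ - (α^β)⁻¹)) atTop atTop := by
      refine Tendsto.atTop_mul_const hc ?_
      exact (tendsto_rpow_atTop hβ).comp (tendsto_atTop_add_const_right atTop (-μ) tendsto_id)
    refine tendsto_atTop_mono' atTop ?_ hG
    filter_upwards [eventually_ge_atTop μ, eventually_ge_atTop μ',
      eventually_ge_atTop ((l*μ' - α'*μ)/(l - α'))] with x k1 k2 k3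
    have hxμ : 0 ≤ x - μ := by linarith
    have key : α' * (x - μ) ≤ l * (x - μ') := by
      have := (div_le_iff₀ (by linarith : (0:ℝ) < l - α')).mp k3
      nlinarith
    have e1 : ((x - μ)/l)^β ≤ (|x - μ'| / α') ^ β := by
      apply Real.rpow_le_rpow (by positivity) _ hβ.le
      rw [div_le_div_iff₀ hlpos hα']
      have : x - μ' ≤ |x - μ'| := le_abs_self _
      nlinarith
    have e2 : ((x - μ)/l)^β - ((x - μ)/α)^β = (x - μ)^β * ((l^β)⁻¹ - (α^β)⁻¹) := by
      rw [Real.div_rpow hxμ hlpos.le, Real.div_rpow hxμ hα.le]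
      ring
    have e3 : (|x - μ| / α) ^ β = ((x - μ)/α)^β := by rw [abs_of_nonneg hxμ]
    rw [e3]
    linarith

lemma gnpdf_pos {μ α β : ℝ} (hα : 0 < α) (hβ : 0 < β) (x : ℝ) : 0 < gnpdf μ α β x := by
  unfold gnpdf
  have hΓ : 0 < Real.Gamma (1/β) := Real.Gamma_pos_of_pos (by positivity)
  positivity

lemma gnpdf_neg (μ α β x : ℝ) : gnpdf μ α β (-x) = gnpdf (-μ) α β x := by
  unfold gnpdf
  rw [show -x - μ = -(x - -μ) by ring, abs_neg]

lemma ratio_tendsto_atTop (L M : ℕ)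
    (ωf μf αf βf : Fin (L + 1) → ℝ) (ωg μg αg βg : Fin (M + 1) → ℝ)
    (hωf : ∀ j, 0 < ωf j) (hαf : ∀ j, 0 < αf j) (hβf : ∀ j, 0 < βf j)
    (hωg : ∀ k, 0 < ωg k) (hαg : ∀ k, 0 < αg k) (hβg : ∀ k, 0 < βg k)
    (j : Fin (L + 1))
    (hdom : ∀ k, βf j < βg k ∨ (βf j = βg k ∧ αg k < αf j)) :
    Tendsto (fun x => (∑ i, ωf i * gnpdf (μf i) (αf i) (βf i) x)
      / (∑ k, ωg k * gnpdf (μg k) (αg k) (βg k) x)) atTop atTop := by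
  set E : ℝ → ℝ := fun x => (|x - μf j| / αf j) ^ (βf j) with hE
  set A : ℝ := ωf j * (βf j / (2 * αf j * Real.Gamma (1 / βf j))) with hA
  have hbfj := hβf j
  have hafj := hαf j
  have hwfj := hωf j
  have hΓf : 0 < Real.Gamma (1 / βf j) := Real.Gamma_pos_of_pos (by positivity)
  have hApos : 0 < A := by rw [hA]; positivity
  set s : ℝ → ℝ := fun x => ∑ k, ωg k * (βg k / (2 * αg k * Real.Gamma (1 / βg k))) *
    Real.exp (E x - (|x - μg k| / αg k) ^ (βg k)) with hs
  have hspos : ∀ x, 0 < s x := by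
    intro x
    refine Finset.sum_pos (fun k _ => ?_) Finset.univ_nonempty
    have h1 := hωg k; have h2 := hαg k; have h3 := hβg k
    have hΓ : 0 < Real.Gamma (1 / βg k) := Real.Gamma_pos_of_pos (by positivity)
    positivity
  have hsto : Tendsto s atTop (𝓝 0) := by
    rw [hs, show (0:ℝ) = ∑ k : Fin (M+1), (0:ℝ) by simp]
    refine tendsto_finset_sum _ (fun k _ => ?_)
    have hkey : Tendsto (fun x => (|x - μg k| / αg k) ^ (βg k) - E x) atTop atTop :=
      key_tendsto (μf j) (μg k) (αf j) (αg k) (βf j) (βg k) (hαf j) (hαg k) (hβf j) (hβg k) (hdom k)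
    have hexp : Tendsto (fun x => Real.exp (E x - (|x - μg k| / αg k) ^ (βg k))) atTop (𝓝 0) := by
      refine Real.tendsto_exp_atBot.comp ?_
      have := tendsto_neg_atTop_atBot.comp hkey
      refine this.congr (fun x => by simp [Function.comp])
    simpa using hexp.const_mul (ωg k * (βg k / (2 * αg k * Real.Gamma (1 / βg k))))
  have hinv : Tendsto (fun x => A * (s x)⁻¹) atTop atTop := by
    refine Tendsto.const_mul_atTop hApos ?_
    refine tendsto_inv_nhdsGT_zero.comp ?_
    exact tendsto_nhdsWithin_of_tendsto_nhds_of_eventually_within _ hsto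
      (Eventually.of_forall (fun x => hspos x))
  refine tendsto_atTop_mono (fun x => ?_) hinv
  have hgx : (0:ℝ) < ∑ k, ωg k * gnpdf (μg k) (αg k) (βg k) x :=
    Finset.sum_pos (fun k _ => mul_pos (hωg k) (gnpdf_pos (hαg k) (hβg k) x)) Finset.univ_nonempty
  have hseq : s x = Real.exp (E x) * ∑ k, ωg k * gnpdf (μg k) (αg k) (βg k) x := by
    rw [hs, Finset.mul_sum]
    refine Finset.sum_congr rfl (fun k _ => ?_)
    unfold gnpdf
    rw [Real.exp_sub, Real.exp_neg]
    field_simp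
  have hfx : A * Real.exp (-(E x)) ≤ ∑ i, ωf i * gnpdf (μf i) (αf i) (βf i) x := by
    have := Finset.single_le_sum (f := fun i => ωf i * gnpdf (μf i) (αf i) (βf i) x)
      (fun i _ => le_of_lt (mul_pos (hωf i) (gnpdf_pos (hαf i) (hβf i) x))) (Finset.mem_univ j)
    calc A * Real.exp (-(E x)) = ωf j * gnpdf (μf j) (αf j) (βf j) x := by
          unfold gnpdf; rw [hA, hE]; ring
      _ ≤ _ := this
  have heq : A * (s x)⁻¹ = (A * Real.exp (-(E x))) / (∑ k, ωg k * gnpdf (μg k) (αg k) (βg k) x) := by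
    rw [hseq, mul_inv, Real.exp_neg]
    ring
  rw [heq]
  exact div_le_div_of_nonneg_right hfx hgx.le


/-- Step 1 of Lemma 2: Let `f`, `g` be finite mixtures of generalized
normal densities with strictly positive weights, scales and shapes (weights summing
to 1). Let `βfmin` be the minimal component shape of `f` and `αfmax` the maximal
scale among the components of `f` whose shape equals `βfmin` (and analogously
`βgmin`, `αgmax` for `g`). If the tail-dominant components differ in shape
(`βfmin ≠ βgmin`) or have equal shape but different scales
(`βfmin = βgmin ∧ αfmax ≠ αgmax`), then the density ratio `r = f/g` is
non-monotonic. -/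
theorem mixture_ratio_nonMonotonic_of_tail_mismatch
    (Lf Lg : ℕ)
    (ωf μf αf βf : Fin (Lf + 1) → ℝ) (ωg μg αg βg : Fin (Lg + 1) → ℝ)
    (hωf : ∀ j, 0 < ωf j) (hαf : ∀ j, 0 < αf j) (hβf : ∀ j, 0 < βf j)
    (hωg : ∀ k, 0 < ωg k) (hαg : ∀ k, 0 < αg k) (hβg : ∀ k, 0 < βg k)
    (hsumf : ∑ j, ωf j = 1) (hsumg : ∑ k, ωg k = 1)
    (βfmin βgmin αfmax αgmax : ℝ)
    (hβfmin : βfmin = Finset.univ.inf' Finset.univ_nonempty βf)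
    (hβgmin : βgmin = Finset.univ.inf' Finset.univ_nonempty βg)
    (hnef : (Finset.univ.filter fun j => βf j = βfmin).Nonempty)
    (hneg : (Finset.univ.filter fun k => βg k = βgmin).Nonempty)
    (hαfmax : αfmax = (Finset.univ.filter fun j => βf j = βfmin).sup' hnef αf)
    (hαgmax : αgmax = (Finset.univ.filter fun k => βg k = βgmin).sup' hneg αg)
    (hne : βfmin ≠ βgmin ∨ (βfmin = βgmin ∧ αfmax ≠ αgmax))
    (r : ℝ → ℝ)
    (hr : ∀ x, r x = (∑ j, ωf j * gnpdf (μf j) (αf j) (βf j) x)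
                   / (∑ k, ωg k * gnpdf (μg k) (αg k) (βg k) x)) :
    ∃ x₀ x₁ x₂ : ℝ, x₀ < x₁ ∧ x₁ < x₂ ∧ (r x₀ - r x₁) * (r x₁ - r x₂) < 0 := by
  have hF : ∀ x, 0 < ∑ j, ωf j * gnpdf (μf j) (αf j) (βf j) x := fun x =>
    Finset.sum_pos (fun i _ => mul_pos (hωf i) (gnpdf_pos (hαf i) (hβf i) x)) Finset.univ_nonempty
  have hGp : ∀ x, 0 < ∑ k, ωg k * gnpdf (μg k) (αg k) (βg k) x := fun x =>
    Finset.sum_pos (fun i _ => mul_pos (hωg i) (gnpdf_pos (hαg i) (hβg i) x)) Finset.univ_nonempty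
  obtain ⟨jf, hjfmem, hjfsup⟩ := Finset.exists_mem_eq_sup' hnef αf
  obtain ⟨jg, hjgmem, hjgsup⟩ := Finset.exists_mem_eq_sup' hneg αg
  have hjfβ : βf jf = βfmin := (Finset.mem_filter.mp hjfmem).2
  have hjgβ : βg jg = βgmin := (Finset.mem_filter.mp hjgmem).2
  have hjfα : αf jf = αfmax := by rw [hαfmax, hjfsup]
  have hjgα : αg jg = αgmax := by rw [hαgmax, hjgsup]
  have hgle : ∀ k, βgmin ≤ βg k := fun k => hβgmin ▸ Finset.inf'_le _ (Finset.mem_univ k)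
  have hfle : ∀ j, βfmin ≤ βf j := fun j => hβfmin ▸ Finset.inf'_le _ (Finset.mem_univ j)
  have hgαle : ∀ k, βg k = βgmin → αg k ≤ αgmax := fun k hk =>
    hαgmax ▸ Finset.le_sup' αg (Finset.mem_filter.mpr ⟨Finset.mem_univ k, hk⟩)
  have hfαle : ∀ j, βf j = βfmin → αf j ≤ αfmax := fun j hj =>
    hαfmax ▸ Finset.le_sup' αf (Finset.mem_filter.mpr ⟨Finset.mem_univ j, hj⟩)
  have hcase : (∃ j, ∀ k, βf j < βg k ∨ (βf j = βg k ∧ αg k < αf j)) ∨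
      (∃ k, ∀ j, βg k < βf j ∨ (βg k = βf j ∧ αf j < αg k)) := by
    rcases hne with hne1 | ⟨heq, hne2⟩
    · rcases lt_or_gt_of_ne hne1 with h | h
      · exact Or.inl ⟨jf, fun k => Or.inl (by rw [hjfβ]; exact lt_of_lt_of_le h (hgle k))⟩
      · exact Or.inr ⟨jg, fun j => Or.inl (by rw [hjgβ]; exact lt_of_lt_of_le h (hfle j))⟩
    · rcases lt_or_gt_of_ne hne2 with h | h
      · refine Or.inr ⟨jg, fun j => ?_⟩
        rcases eq_or_lt_of_le (hfle j) with hj | hj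
        · exact Or.inr ⟨by rw [hjgβ, ← heq, hj], by
            rw [hjgα]; exact lt_of_le_of_lt (hfαle j hj.symm) h⟩
        · exact Or.inl (by rw [hjgβ, ← heq]; exact hj)
      · refine Or.inl ⟨jf, fun k => ?_⟩
        rcases eq_or_lt_of_le (hgle k) with hk | hk
        · exact Or.inr ⟨by rw [hjfβ, heq, hk], by
            rw [hjfα]; exact lt_of_le_of_lt (hgαle k hk.symm) h⟩
        · exact Or.inl (by rw [hjfβ, heq]; exact hk)
  rcases hcase with ⟨j, hdom⟩ | ⟨k, hdom⟩
  · have T1 : Tendsto r atTop atTop :=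
      (ratio_tendsto_atTop Lf Lg ωf μf αf βf ωg μg αg βg hωf hαf hβf hωg hαg hβg j hdom).congr
        (fun x => (hr x).symm)
    have T2 : Tendsto r atBot atTop := by
      have h2 := ratio_tendsto_atTop Lf Lg ωf (fun i => -μf i) αf βf ωg (fun i => -μg i) αg βg
        hωf hαf hβf hωg hαg hβg j hdom
      have h3 : Tendsto (fun x => r (-x)) atTop atTop :=
        h2.congr (fun x => by rw [hr (-x)]; simp only [gnpdf_neg])
      have h4 := h3.comp tendsto_neg_atBot_atTop
      refine h4.congr (fun x => by simp [Function.comp])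
    obtain ⟨x₂, h2a, h2b⟩ := ((T1.eventually_gt_atTop (r 0)).and (eventually_gt_atTop (0:ℝ))).exists
    obtain ⟨x₀, h0a, h0b⟩ := ((T2.eventually_gt_atTop (r 0)).and (eventually_lt_atBot (0:ℝ))).exists
    exact ⟨x₀, 0, x₂, h0b, h2b, mul_neg_of_pos_of_neg (by linarith) (by linarith)⟩
  · have hr' : ∀ x, r x = ((∑ i, ωg i * gnpdf (μg i) (αg i) (βg i) x)
        / (∑ i, ωf i * gnpdf (μf i) (αf i) (βf i) x))⁻¹ := fun x => by
      rw [hr, inv_div]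
    have T1 : Tendsto r atTop (𝓝 0) :=
      ((ratio_tendsto_atTop Lg Lf ωg μg αg βg ωf μf αf βf hωg hαg hβg hωf hαf hβf k
        hdom).inv_tendsto_atTop).congr (fun x => by rw [hr' x]; simp only [Pi.inv_apply])
    have T2 : Tendsto r atBot (𝓝 0) := by
      have h2 := (ratio_tendsto_atTop Lg Lf ωg (fun i => -μg i) αg βg ωf (fun i => -μf i) αf βf
        hωg hαg hβg hωf hαf hβf k hdom).inv_tendsto_atTop
      have h3 : Tendsto (fun x => r (-x)) atTop (𝓝 0) :=
        h2.congr (fun x => by rw [hr' (-x)]; simp only [gnpdf_neg, Pi.inv_apply])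
      have h4 := h3.comp tendsto_neg_atBot_atTop
      refine h4.congr (fun x => by simp [Function.comp])
    have hr0 : 0 < r 0 := by rw [hr]; exact div_pos (hF 0) (hGp 0)
    obtain ⟨x₂, h2a, h2b⟩ := ((T1.eventually (gt_mem_nhds hr0)).and (eventually_gt_atTop (0:ℝ))).exists
    obtain ⟨x₀, h0a, h0b⟩ := ((T2.eventually (gt_mem_nhds hr0)).and (eventually_lt_atBot (0:ℝ))).exists
    exact ⟨x₀, 0, x₂, h0b, h2b, mul_neg_of_neg_of_pos (by linarith) (by linarith)⟩
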